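/- Assume (i) θ ↦ w_s(θ)·w_g(θ) is monotone nonincreasing on [0, π] and W_{0,0}(x,y) > 0 for all (x,y) ∈ ℝ²; and (ii) for every (i,j) ∈ ℐ, the ratio W_{i,j}(x,y)/W_{0,0}(x,y) is convex in x on [−Δ/2, Δ/2] for each fixed y ∈ [−√3Δ/2, √3Δ/2] and convex in y on [−√3Δ/2, √3Δ/2] for each fixed x ∈ [−Δ/2, Δ/2]. Then SINR(x,y) ≤ SINR(0,0) for every (x,y) ∈ ℝ², i.e., the SINR is maximized by placing the ground terminal directly below its serving satellite. -/

import Mathlib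

open Real

/-- Distance from ground point `(x, y, 0)` to satellite `s_{i,j} = (iΔ/2, j√3Δ/2, h)`. -/
noncomputable def Dfun (Δ h : ℝ) (i j : ℤ) (x y : ℝ) : ℝ :=
  Real.sqrt ((x - i * Δ / 2) ^ 2 + (y - j * Real.sqrt 3 * Δ / 2) ^ 2 + h ^ 2)

/-- Off-axis angle `θ_{i,j}(x,y) = arccos(h / D_{i,j}(x,y))`. -/
noncomputable def θfun (Δ h : ℝ) (i j : ℤ) (x y : ℝ) : ℝ :=
  Real.arccos (h / Dfun Δ h i j x y)

/-- Combined beam attenuation `W_{i,j}(x,y) = w_s(θ_{i,j}(x,y))·w_g(θ_{i,j}(x,y))`. -/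
noncomputable def Wfun (ws wg : ℝ → ℝ) (Δ h : ℝ) (i j : ℤ) (x y : ℝ) : ℝ :=
  ws (θfun Δ h i j x y) * wg (θfun Δ h i j x y)

/-- Signal-to-noise ratio at the ground point `(x, y)`, served by satellite `s_{0,0}`. -/
noncomputable def SNR (ws wg : ℝ → ℝ) (Δ h α p σ2 : ℝ) (x y : ℝ) : ℝ :=
  (p / σ2) * Dfun Δ h 0 0 x y ^ (-α) * Wfun ws wg Δ h 0 0 x y

/-- Interference-to-noise ratio at the ground point `(x, y)`: sum over all satellites
`(i,j)` with `i ≡ j (mod 2)` other than `(0,0)`. -/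
noncomputable def INR (ws wg : ℝ → ℝ) (Δ h α p σ2 : ℝ) (x y : ℝ) : ℝ :=
  (p / σ2) * ∑' q : ℤ × ℤ,
    if q.1 % 2 = q.2 % 2 ∧ q ≠ (0, 0) then
      Dfun Δ h q.1 q.2 x y ^ (-α) * Wfun ws wg Δ h q.1 q.2 x y
    else 0

/-- `SINR(x,y) = SNR(x,y) / (INR(x,y) + 1)`. -/
noncomputable def SINR (ws wg : ℝ → ℝ) (Δ h α p σ2 : ℝ) (x y : ℝ) : ℝ :=
  SNR ws wg Δ h α p σ2 x y / (INR ws wg Δ h α p σ2 x y + 1)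

/-! ### Auxiliary definitions and lemmas -/

section Aux

variable {ws wg : ℝ → ℝ} {Δ h α : ℝ}

lemma Dfun_sq (Δ h : ℝ) (i j : ℤ) (x y : ℝ) :
    (Dfun Δ h i j x y) ^ 2 = (x - i * Δ / 2) ^ 2 + (y - j * Real.sqrt 3 * Δ / 2) ^ 2 + h ^ 2 :=
  Real.sq_sqrt (by positivity)

lemma h_le_Dfun (hh : 0 < h) (Δ : ℝ) (i j : ℤ) (x y : ℝ) : h ≤ Dfun Δ h i j x y := by
  have : h = Real.sqrt (h ^ 2) := (Real.sqrt_sq hh.le).symm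
  rw [this, Dfun]
  apply Real.sqrt_le_sqrt
  nlinarith [sq_nonneg (x - i * Δ / 2), sq_nonneg (y - j * Real.sqrt 3 * Δ / 2), sq_nonneg h]

lemma Dfun_pos (hh : 0 < h) (Δ : ℝ) (i j : ℤ) (x y : ℝ) : 0 < Dfun Δ h i j x y :=
  lt_of_lt_of_le hh (h_le_Dfun hh Δ i j x y)

lemma Dfun_le_Dfun {h : ℝ} {i j k l : ℤ} {x y x' y' : ℝ}
    (hsq : (x - i * Δ / 2) ^ 2 + (y - j * Real.sqrt 3 * Δ / 2) ^ 2
      ≤ (x' - k * Δ / 2) ^ 2 + (y' - l * Real.sqrt 3 * Δ / 2) ^ 2) :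
    Dfun Δ h i j x y ≤ Dfun Δ h k l x' y' :=
  Real.sqrt_le_sqrt (by linarith)

lemma Dfun_eq {h : ℝ} {i j k l : ℤ} {x y x' y' : ℝ}
    (h1 : (x - i * Δ / 2) ^ 2 = (x' - k * Δ / 2) ^ 2)
    (h2 : (y - j * Real.sqrt 3 * Δ / 2) ^ 2 = (y' - l * Real.sqrt 3 * Δ / 2) ^ 2) :
    Dfun Δ h i j x y = Dfun Δ h k l x' y' := by
  unfold Dfun; rw [h1, h2]

lemma arccos_le_arccos' {a b : ℝ} (ha : -1 ≤ a) (hb : b ≤ 1) (hab : a ≤ b) :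
    Real.arccos b ≤ Real.arccos a := by
  rcases eq_or_lt_of_le hab with rfl | hlt
  · exact le_rfl
  · exact (Real.strictAntiOn_arccos ⟨ha, hab.trans hb⟩ ⟨ha.trans hab, hb⟩ hlt).le

lemma θfun_mem (Δ h : ℝ) (i j : ℤ) (x y : ℝ) : θfun Δ h i j x y ∈ Set.Icc 0 π :=
  ⟨Real.arccos_nonneg _, Real.arccos_le_pi _⟩

lemma Wfun_nonneg (hwsnn : ∀ θ ∈ Set.Icc (0 : ℝ) π, 0 ≤ ws θ)
    (hwgnn : ∀ θ ∈ Set.Icc (0 : ℝ) π, 0 ≤ wg θ) (Δ h : ℝ) (i j : ℤ) (x y : ℝ) :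
    0 ≤ Wfun ws wg Δ h i j x y :=
  mul_nonneg (hwsnn _ (θfun_mem Δ h i j x y)) (hwgnn _ (θfun_mem Δ h i j x y))

lemma Wfun_le_Wfun (hmono : AntitoneOn (fun θ => ws θ * wg θ) (Set.Icc (0 : ℝ) π))
    (hh : 0 < h) {i j k l : ℤ} {x y x' y' : ℝ}
    (hD : Dfun Δ h i j x y ≤ Dfun Δ h k l x' y') :
    Wfun ws wg Δ h k l x' y' ≤ Wfun ws wg Δ h i j x y := by
  have h1 : 0 < Dfun Δ h i j x y := Dfun_pos hh Δ i j x y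
  have h2 : 0 < Dfun Δ h k l x' y' := Dfun_pos hh Δ k l x' y'
  have key : θfun Δ h i j x y ≤ θfun Δ h k l x' y' := by
    apply arccos_le_arccos'
    · have : 0 < h / Dfun Δ h k l x' y' := by positivity
      linarith
    · rw [div_le_one h1]; exact h_le_Dfun hh Δ i j x y
    · exact div_le_div_of_nonneg_left hh.le h1 hD
  exact hmono (θfun_mem Δ h i j x y) (θfun_mem Δ h k l x' y') key

lemma Wfun_congr {h : ℝ} {i j k l : ℤ} {x y x' y' : ℝ}
    (hD : Dfun Δ h i j x y = Dfun Δ h k l x' y') :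
    Wfun ws wg Δ h i j x y = Wfun ws wg Δ h k l x' y' := by
  unfold Wfun θfun; rw [hD]

lemma rpow_neg_antitone {a b α : ℝ} (ha : 0 < a) (hab : a ≤ b) (hα : 0 ≤ α) :
    b ^ (-α) ≤ a ^ (-α) := by
  rw [Real.rpow_neg (ha.trans_le hab).le, Real.rpow_neg ha.le]
  exact inv_anti₀ (Real.rpow_pos_of_pos ha α) (Real.rpow_le_rpow ha.le hab hα)

end Aux

set_option maxHeartbeats 1000000 in
lemma key_case_B (S Δ h x z : ℝ) (hS : S^2 = 3) (hSpos : 0 < S) (hΔ : 0 < Δ)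
    (hx : x^2 ≤ Δ^2/4) (hz : z ≤ S*Δ/2) (hcond : Δ^2 < z*S*Δ) :
    (x^2 + Δ^2/4 + (z - S*Δ/2)^2 + h^2) * (z*S*Δ - Δ^2) ≤ (z^2 + h^2) * Δ^2 := by
  have hz3 : S*Δ < 3*z := by
    have h1 : (S*Δ)*Δ < (3*z)*Δ := by nlinarith [mul_lt_mul_of_pos_right hcond hSpos]
    exact lt_of_mul_lt_mul_right h1 hΔ.le
  have ht : z*S*Δ - Δ^2 ≤ Δ^2/2 := by nlinarith
  have htpos : 0 < z*S*Δ - Δ^2 := by linarith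
  have hq : (z - S*Δ/2)^2 ≤ Δ^2/12 := by
    nlinarith [mul_nonneg (by nlinarith : (0:ℝ) ≤ 2*S*Δ/3 - z) (by nlinarith : (0:ℝ) ≤ z - S*Δ/3)]
  have hz2 : Δ^2/3 ≤ z^2 := by nlinarith
  have h1 : (x^2 + Δ^2/4 + (z - S*Δ/2)^2 + h^2) * (z*S*Δ - Δ^2)
      ≤ (7*Δ^2/12 + h^2) * (z*S*Δ - Δ^2) := by
    apply mul_le_mul_of_nonneg_right _ htpos.le
    linarith
  have h2 : (7*Δ^2/12 + h^2) * (z*S*Δ - Δ^2) ≤ (7*Δ^2/12) * (Δ^2/2) + h^2 * Δ^2 := by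
    nlinarith [sq_nonneg h, sq_nonneg Δ]
  nlinarith [sq_nonneg h]

set_option maxHeartbeats 1000000 in
lemma key_poly {Δ : ℝ} (hΔ : 0 < Δ) {i j : ℤ} (hpar : i % 2 = j % 2) {x y h : ℝ}
    (hx : x^2 ≤ (Δ/2)^2) (hy : y^2 ≤ (Real.sqrt 3*Δ/2)^2) :
    0 ≤ (x^2 + (((i:ℝ)*Δ/2)^2 + ((y - (j:ℝ)*Real.sqrt 3*Δ/2)^2 + h^2)))
      * ((((i:ℝ)*Δ/2)^2 + ((y - (j:ℝ)*Real.sqrt 3*Δ/2)^2 + h^2)) - (y^2 + h^2))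
      + 4*(y^2+h^2)*(((i:ℝ)*Δ/2)^2) := by
  have hS : (Real.sqrt 3)^2 = 3 := Real.sq_sqrt (by norm_num)
  have hSpos : 0 < Real.sqrt 3 := Real.sqrt_pos.mpr (by norm_num)
  set S := Real.sqrt 3 with hSdef
  set d : ℝ := (i:ℝ)*Δ/2 with hd
  set w : ℝ := (j:ℝ)*S*Δ/2 with hw
  clear_value S d w
  rcases le_or_gt 0 ((d^2 + ((y-w)^2 + h^2)) - (y^2+h^2)) with hA | hB
  · have h1 : (0:ℝ) ≤ x^2 + (d^2 + ((y-w)^2 + h^2)) := by positivity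
    have h2 : (0:ℝ) ≤ 4*(y^2+h^2)*d^2 := by positivity
    nlinarith [mul_nonneg h1 hA]
  · -- case B
    have hB' : d^2 + w^2 < 2*y*w := by nlinarith
    have hyabs : |y| ≤ S*Δ/2 := by
      have := abs_le_of_sq_le_sq' (by nlinarith : y^2 ≤ (S*Δ/2)^2) (by positivity)
      exact abs_le.mpr this
    have hd2y2 : d^2 < y^2 := by nlinarith [sq_nonneg (y - w)]
    have hj : j = 1 ∨ j = -1 := by
      have hwne : w ≠ 0 := by
        intro h0; rw [h0] at hB'; nlinarith [sq_nonneg d]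
      have hjne : j ≠ 0 := by
        intro h0
        apply hwne
        rw [hw, h0]; push_cast; ring
      have hwabs : |w| < S*Δ := by
        have h1 : w^2 < 2*y*w := by nlinarith [sq_nonneg d]
        have h2 : 2*y*w ≤ 2 * |y| * |w| := by
          have := le_abs_self (y*w)
          rw [abs_mul] at this
          linarith
        have h4 : 2 * |y| * |w| ≤ (S*Δ) * |w| := by
          have := abs_nonneg w
          have h5 : 2 * |y| ≤ S*Δ := by linarith
          exact mul_le_mul_of_nonneg_right h5 this
        have h3 : |w| * |w| < (S*Δ) * |w| := by
          have h6 : |w| * |w| = w^2 := by rw [← sq_abs w]; ring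
          linarith
        have h7 : (0:ℝ) ≤ |w| := abs_nonneg w
        exact lt_of_mul_lt_mul_right h3 h7
      have hj2 : (j:ℝ)^2 < 4 := by
        have hwv : w^2 = (j:ℝ)^2 * (S*Δ/2)^2 := by rw [hw]; ring
        have hw2 : w^2 < (S*Δ)^2 := by
          have h8 : 0 < S*Δ - |w| := by linarith
          have h9 : (0:ℝ) < S*Δ + |w| := by positivity
          nlinarith [mul_pos h8 h9, sq_abs w]
        nlinarith [mul_pos hSpos hΔ, mul_pos (mul_pos hSpos hΔ) (mul_pos hSpos hΔ)]
      have hjR : ((-2):ℝ) < (j:ℝ) ∧ (j:ℝ) < 2 := by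
        constructor <;> nlinarith [sq_nonneg ((j:ℝ)+2), sq_nonneg ((j:ℝ)-2)]
      have hjl : (-2) < j := by exact_mod_cast hjR.1
      have hjr : j < 2 := by exact_mod_cast hjR.2
      omega
    have hi : i = 1 ∨ i = -1 := by
      have hi2 : (i:ℝ)^2 < 4 := by
        have hdv : d^2 = (i:ℝ)^2 * (Δ/2)^2 := by rw [hd]; ring
        have hy2 : y^2 ≤ 3*Δ^2/4 := by nlinarith
        nlinarith [mul_pos hΔ hΔ]
      have hiR : ((-2):ℝ) < (i:ℝ) ∧ (i:ℝ) < 2 := by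
        constructor <;> nlinarith [sq_nonneg ((i:ℝ)+2), sq_nonneg ((i:ℝ)-2)]
      have hil : (-2) < i := by exact_mod_cast hiR.1
      have hir : i < 2 := by exact_mod_cast hiR.2
      have hjodd : j % 2 = 1 := by rcases hj with rfl | rfl <;> decide
      omega
    have hx' : x^2 ≤ Δ^2/4 := by nlinarith
    rcases hj with rfl | rfl <;> rcases hi with rfl | rfl
    · push_cast [hd, hw] at hB' hd2y2 ⊢
      have hcond : Δ^2 < y*S*Δ := by nlinarith
      have hzle : y ≤ S*Δ/2 := (abs_le.mp hyabs).2
      nlinarith [key_case_B S Δ h x y hS hSpos hΔ hx' hzle hcond]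
    · push_cast [hd, hw] at hB' hd2y2 ⊢
      have hcond : Δ^2 < y*S*Δ := by nlinarith
      have hzle : y ≤ S*Δ/2 := (abs_le.mp hyabs).2
      nlinarith [key_case_B S Δ h x y hS hSpos hΔ hx' hzle hcond]
    · push_cast [hd, hw] at hB' hd2y2 ⊢
      have hcond : Δ^2 < (-y)*S*Δ := by nlinarith
      have hzle : -y ≤ S*Δ/2 := by
        have := (abs_le.mp hyabs).1; linarith
      nlinarith [key_case_B S Δ h x (-y) hS hSpos hΔ hx' hzle hcond]
    · push_cast [hd, hw] at hB' hd2y2 ⊢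
      have hcond : Δ^2 < (-y)*S*Δ := by nlinarith
      have hzle : -y ≤ S*Δ/2 := by
        have := (abs_le.mp hyabs).1; linarith
      nlinarith [key_case_B S Δ h x (-y) hS hSpos hΔ hx' hzle hcond]

/-- generic quadratic-ratio midpoint inequality -/
lemma ratio_quad {t d c e : ℝ} (hc : 0 < c) (he : 0 < e)
    (hK : 0 ≤ (t^2 + (d^2 + e)) * ((d^2 + e) - c) + 4*c*d^2) :
    2 * (c / (d^2 + e)) ≤ (t^2 + c) / ((t - d)^2 + e) + (t^2 + c) / ((-t - d)^2 + e) := by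
  have hv1 : (0:ℝ) < (t - d)^2 + e := by positivity
  have hv2 : (0:ℝ) < (-t - d)^2 + e := by positivity
  have hv0 : (0:ℝ) < d^2 + e := by positivity
  rw [div_add_div _ _ (ne_of_gt hv1) (ne_of_gt hv2), ← mul_div_assoc,
    div_le_div_iff₀ hv0 (by positivity)]
  nlinarith [mul_nonneg (sq_nonneg t) hK]

/-- midpoint inequality is preserved by x ↦ x^p, p ≥ 1 -/
lemma ratio_rpow {p r0 r1 r2 : ℝ} (hp : 1 ≤ p) (h0 : 0 ≤ r0) (h1 : 0 ≤ r1) (h2 : 0 ≤ r2)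
    (hmid : 2 * r0 ≤ r1 + r2) : 2 * r0 ^ p ≤ r1 ^ p + r2 ^ p := by
  have hconv := (convexOn_rpow hp).2 (Set.mem_Ici.mpr h1) (Set.mem_Ici.mpr h2)
    (by norm_num : (0:ℝ) ≤ 1/2) (by norm_num : (0:ℝ) ≤ 1/2) (by norm_num)
  simp only [smul_eq_mul] at hconv
  have hmono : r0 ^ p ≤ ((1/2) * r1 + (1/2) * r2) ^ p :=
    Real.rpow_le_rpow h0 (by linarith) (by linarith)
  linarith

/-- Chebyshev-type product bound -/
lemma cheb_prod {a a' b b' a0 b0 : ℝ} (ha : 0 ≤ a) (ha' : 0 ≤ a') (hb : 0 ≤ b) (hb' : 0 ≤ b')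
    (ha0 : 0 ≤ a0) (hb0 : 0 ≤ b0) (hcom : 0 ≤ (a - a') * (b - b'))
    (hma : 2*a0 ≤ a + a') (hmb : 2*b0 ≤ b + b') : 2 * (a0 * b0) ≤ a*b + a'*b' := by
  nlinarith [mul_le_mul hma hmb (by linarith) (by linarith)]

lemma rpow_ratio_sq {α A B : ℝ} (hα : 0 ≤ α) (hA : 0 ≤ A) (hB : 0 < B) :
    (A/B) ^ α = (A^2/B^2) ^ (α/2) := by
  have hAB : (0:ℝ) ≤ A/B := by positivity
  rw [← div_pow, ← Real.rpow_natCast (A/B) 2, ← Real.rpow_mul hAB]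
  ring_nf

/-- normalized received power from satellite `(i,j)` -/
noncomputable def pw (ws wg : ℝ → ℝ) (Δ h α : ℝ) (i j : ℤ) (x y : ℝ) : ℝ :=
  Dfun Δ h i j x y ^ (-α) * Wfun ws wg Δ h i j x y

/-- the summand of the interference sum -/
noncomputable def Fq (ws wg : ℝ → ℝ) (Δ h α : ℝ) (x y : ℝ) (q : ℤ × ℤ) : ℝ :=
  if q.1 % 2 = q.2 % 2 ∧ q ≠ (0, 0) then
    Dfun Δ h q.1 q.2 x y ^ (-α) * Wfun ws wg Δ h q.1 q.2 x y
  else 0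

section PW

variable {ws wg : ℝ → ℝ} {Δ h α : ℝ}

lemma pw_nonneg (hwsnn : ∀ θ ∈ Set.Icc (0 : ℝ) π, 0 ≤ ws θ)
    (hwgnn : ∀ θ ∈ Set.Icc (0 : ℝ) π, 0 ≤ wg θ) (i j : ℤ) (x y : ℝ) :
    0 ≤ pw ws wg Δ h α i j x y :=
  mul_nonneg (Real.rpow_nonneg (Real.sqrt_nonneg _) _) (Wfun_nonneg hwsnn hwgnn Δ h i j x y)

lemma Fq_nonneg (hwsnn : ∀ θ ∈ Set.Icc (0 : ℝ) π, 0 ≤ ws θ)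
    (hwgnn : ∀ θ ∈ Set.Icc (0 : ℝ) π, 0 ≤ wg θ) (x y : ℝ) (q : ℤ × ℤ) :
    0 ≤ Fq ws wg Δ h α x y q := by
  unfold Fq
  split_ifs
  · exact pw_nonneg hwsnn hwgnn q.1 q.2 x y
  · exact le_rfl

lemma pw_congr {i j k l : ℤ} {x y x' y' : ℝ}
    (hD : Dfun Δ h i j x y = Dfun Δ h k l x' y') :
    pw ws wg Δ h α i j x y = pw ws wg Δ h α k l x' y' := by
  unfold pw; rw [hD, Wfun_congr hD]

lemma pw_le_pw (hmono : AntitoneOn (fun θ => ws θ * wg θ) (Set.Icc (0 : ℝ) π))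
    (hwsnn : ∀ θ ∈ Set.Icc (0 : ℝ) π, 0 ≤ ws θ)
    (hwgnn : ∀ θ ∈ Set.Icc (0 : ℝ) π, 0 ≤ wg θ)
    (hh : 0 < h) (hα : 0 ≤ α) {i j k l : ℤ} {x y x' y' : ℝ}
    (hD : Dfun Δ h k l x' y' ≤ Dfun Δ h i j x y) :
    pw ws wg Δ h α i j x y ≤ pw ws wg Δ h α k l x' y' := by
  unfold pw
  apply mul_le_mul
  · exact rpow_neg_antitone (Dfun_pos hh Δ k l x' y') hD hα
  · exact Wfun_le_Wfun hmono hh hD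
  · exact Wfun_nonneg hwsnn hwgnn Δ h i j x y
  · exact Real.rpow_nonneg (Real.sqrt_nonneg _) _

lemma pw_pos00 (hh : 0 < h) {x y : ℝ} (hW00 : 0 < Wfun ws wg Δ h 0 0 x y) :
    0 < pw ws wg Δ h α 0 0 x y :=
  mul_pos (Real.rpow_pos_of_pos (Dfun_pos hh Δ 0 0 x y) _) hW00

lemma pw_div (hh : 0 < h) {i j : ℤ} {x y : ℝ} :
    pw ws wg Δ h α i j x y / pw ws wg Δ h α 0 0 x y
      = (Dfun Δ h 0 0 x y / Dfun Δ h i j x y) ^ α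
        * (Wfun ws wg Δ h i j x y / Wfun ws wg Δ h 0 0 x y) := by
  have h0 : 0 < Dfun Δ h 0 0 x y := Dfun_pos hh Δ 0 0 x y
  have hq : 0 < Dfun Δ h i j x y := Dfun_pos hh Δ i j x y
  unfold pw
  rw [← div_mul_div_comm]
  congr 1
  rw [Real.rpow_neg hq.le, Real.rpow_neg h0.le, inv_div_inv,
    ← Real.div_rpow h0.le hq.le]

end PW


section Step1

variable {ws wg : ℝ → ℝ} {Δ h α p σ2 : ℝ}

lemma INR_eq (ws wg : ℝ → ℝ) (Δ h α p σ2 x y : ℝ) :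
    INR ws wg Δ h α p σ2 x y = (p / σ2) * ∑' q : ℤ × ℤ, Fq ws wg Δ h α x y q := rfl

lemma SNR_eq (ws wg : ℝ → ℝ) (Δ h α p σ2 x y : ℝ) :
    SNR ws wg Δ h α p σ2 x y = (p / σ2) * pw ws wg Δ h α 0 0 x y := by
  unfold SNR pw; ring

lemma summable_Fq (hsum : ∀ x y : ℝ, Summable fun q : ℤ × ℤ =>
      if q.1 % 2 = q.2 % 2 ∧ q ≠ (0, 0) then
        Dfun Δ h q.1 q.2 x y ^ (-α) * Wfun ws wg Δ h q.1 q.2 x y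
      else 0) (x y : ℝ) : Summable (Fq ws wg Δ h α x y) :=
  (hsum x y).congr (fun _ => rfl)

lemma step1 (hΔ : 0 < Δ) (hh : 0 < h) (hα : 2 ≤ α) (hp : 0 < p) (hσ : 0 < σ2)
    (hwsnn : ∀ θ ∈ Set.Icc (0 : ℝ) π, 0 ≤ ws θ)
    (hwgnn : ∀ θ ∈ Set.Icc (0 : ℝ) π, 0 ≤ wg θ)
    (hsum : ∀ x y : ℝ, Summable fun q : ℤ × ℤ =>
      if q.1 % 2 = q.2 % 2 ∧ q ≠ (0, 0) then
        Dfun Δ h q.1 q.2 x y ^ (-α) * Wfun ws wg Δ h q.1 q.2 x y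
      else 0)
    (hmono : AntitoneOn (fun θ => ws θ * wg θ) (Set.Icc (0 : ℝ) π))
    (x y x' y' : ℝ) (m n : ℤ)
    (hxm : x' = x - m*Δ) (hym : y' = y - n*(Real.sqrt 3*Δ))
    (hx2 : x'^2 ≤ x^2) (hy2 : y'^2 ≤ y^2) :
    SINR ws wg Δ h α p σ2 x y ≤ SINR ws wg Δ h α p σ2 x' y' := by
  have hα0 : (0:ℝ) ≤ α := by linarith
  have hA : (0:ℝ) < p / σ2 := div_pos hp hσ
  set A := p / σ2 with hAdef
  -- the translated satellite
  have hDtrans : ∀ (i j : ℤ), Dfun Δ h (i + 2*m) (j + 2*n) x y = Dfun Δ h i j x' y' := by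
    intro i j
    apply Dfun_eq
    · rw [hxm]; push_cast; ring
    · rw [hym]; push_cast; ring
  have hD2m : Dfun Δ h (2*m) (2*n) x y = Dfun Δ h 0 0 x' y' := by
    have := hDtrans 0 0
    simpa using this
  have hDle : Dfun Δ h (2*m) (2*n) x y ≤ Dfun Δ h 0 0 x y := by
    apply Dfun_le_Dfun
    rw [hxm] at hx2
    rw [hym] at hy2
    push_cast
    nlinarith [hx2, hy2]
  set Q := pw ws wg Δ h α 0 0 x y with hQ
  set P := pw ws wg Δ h α 0 0 x' y' with hP
  have hQP : Q ≤ P := by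
    rw [hP, ← pw_congr hD2m]
    exact pw_le_pw hmono hwsnn hwgnn hh hα0 hDle
  have hQ0 : 0 ≤ Q := pw_nonneg hwsnn hwgnn 0 0 x y
  -- sums
  set G : ℤ × ℤ → ℝ := fun q => if q.1 % 2 = q.2 % 2 then pw ws wg Δ h α q.1 q.2 x y else 0
    with hG
  set G' : ℤ × ℤ → ℝ := fun q => if q.1 % 2 = q.2 % 2 then pw ws wg Δ h α q.1 q.2 x' y' else 0
    with hG'
  have hGF : ∀ q, G q = Fq ws wg Δ h α x y q + (if q = ((0:ℤ),(0:ℤ)) then Q else 0) := by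
    intro q
    by_cases h1 : q = ((0:ℤ),(0:ℤ))
    · subst h1; simp [hG, Fq, hQ]
    · have h1z : q ≠ 0 := fun hq => h1 (hq.trans rfl)
      by_cases h2 : q.1 % 2 = q.2 % 2
      · simp [hG, Fq, pw, h1, h1z, h2]
      · simp [hG, Fq, h1, h1z, h2]
  have hG'F : ∀ q, G' q = Fq ws wg Δ h α x' y' q + (if q = ((0:ℤ),(0:ℤ)) then P else 0) := by
    intro q
    by_cases h1 : q = ((0:ℤ),(0:ℤ))
    · subst h1; simp [hG', Fq, hP]
    · have h1z : q ≠ 0 := fun hq => h1 (hq.trans rfl)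
      by_cases h2 : q.1 % 2 = q.2 % 2
      · simp [hG', Fq, pw, h1, h1z, h2]
      · simp [hG', Fq, h1, h1z, h2]
  have hsingQ : Summable (fun q : ℤ × ℤ => if q = ((0:ℤ),(0:ℤ)) then Q else 0) :=
    summable_of_ne_finset_zero (s := {((0:ℤ),(0:ℤ))}) (by intro b hb; simp at hb ⊢; tauto)
  have hsingP : Summable (fun q : ℤ × ℤ => if q = ((0:ℤ),(0:ℤ)) then P else 0) :=
    summable_of_ne_finset_zero (s := {((0:ℤ),(0:ℤ))}) (by intro b hb; simp at hb ⊢; tauto)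
  have hsF := summable_Fq (ws := ws) (wg := wg) hsum x y
  have hsF' := summable_Fq (ws := ws) (wg := wg) hsum x' y'
  have hsG : Summable G := (hsF.add hsingQ).congr (fun q => (hGF q).symm)
  have hsG' : Summable G' := (hsF'.add hsingP).congr (fun q => (hG'F q).symm)
  have htsumG : ∑' q, G q = (∑' q, Fq ws wg Δ h α x y q) + Q := by
    rw [tsum_congr hGF, Summable.tsum_add hsF hsingQ, tsum_ite_eq]
  have htsumG' : ∑' q, G' q = (∑' q, Fq ws wg Δ h α x' y' q) + P := by
    rw [tsum_congr hG'F, Summable.tsum_add hsF' hsingP, tsum_ite_eq]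
  -- translation invariance
  have htrans : ∑' q, G q = ∑' q, G' q := by
    have hpt : ∀ q : ℤ × ℤ, G ((Equiv.addRight ((2*m, 2*n) : ℤ × ℤ)) q) = G' q := by
      intro q
      have he : (Equiv.addRight ((2*m, 2*n) : ℤ × ℤ)) q = (q.1 + 2*m, q.2 + 2*n) := rfl
      rw [he, hG, hG']
      simp only
      have hpar : ((q.1 + 2*m) % 2 = (q.2 + 2*n) % 2) ↔ (q.1 % 2 = q.2 % 2) := by omega
      by_cases h2 : q.1 % 2 = q.2 % 2
      · rw [if_pos (hpar.mpr h2), if_pos h2, pw_congr (hDtrans q.1 q.2)]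
      · rw [if_neg (fun hc => h2 (hpar.mp hc)), if_neg h2]
    calc ∑' q, G q = ∑' q, G ((Equiv.addRight ((2*m, 2*n) : ℤ × ℤ)) q) :=
          ((Equiv.addRight ((2*m, 2*n) : ℤ × ℤ)).tsum_eq G).symm
    _ = ∑' q, G' q := tsum_congr hpt
  have hkey : (∑' q, Fq ws wg Δ h α x y q) + Q = (∑' q, Fq ws wg Δ h α x' y' q) + P := by
    rw [← htsumG, ← htsumG', htrans]
  set SF := ∑' q, Fq ws wg Δ h α x y q with hSF
  set SF' := ∑' q, Fq ws wg Δ h α x' y' q with hSF'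
  have hSFnn : 0 ≤ SF := tsum_nonneg (fun q => Fq_nonneg hwsnn hwgnn x y q)
  have hSF'nn : 0 ≤ SF' := tsum_nonneg (fun q => Fq_nonneg hwsnn hwgnn x' y' q)
  -- final algebra
  rw [SINR, SINR, SNR_eq, SNR_eq, INR_eq, INR_eq, ← hSF, ← hSF', ← hQ, ← hP, ← hAdef]
  rw [div_le_div_iff₀ (by nlinarith) (by nlinarith)]
  have hexp : SF' = SF + Q - P := by linarith
  rw [hexp]
  nlinarith [mul_nonneg (mul_nonneg hA.le (sub_nonneg.mpr hQP))
    (by nlinarith : (0:ℝ) ≤ A*SF + 1 + A*Q)]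

end Step1


/-- negation of the first coordinate as an equivalence of the index set -/
def negFst : ℤ × ℤ ≃ ℤ × ℤ :=
  ⟨fun q => (-q.1, q.2), fun q => (-q.1, q.2), fun q => by simp, fun q => by simp⟩

/-- negation of the second coordinate as an equivalence of the index set -/
def negSnd : ℤ × ℤ ≃ ℤ × ℤ :=
  ⟨fun q => (q.1, -q.2), fun q => (q.1, -q.2), fun q => by simp, fun q => by simp⟩

section MidTerm

variable {ws wg : ℝ → ℝ} {Δ h α : ℝ}

set_option maxHeartbeats 1000000 in
/-- per-term midpoint inequality in the x direction -/
lemma midterm_x (hΔ : 0 < Δ) (hh : 0 < h) (hα : 2 ≤ α)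
    (hwsnn : ∀ θ ∈ Set.Icc (0 : ℝ) π, 0 ≤ ws θ)
    (hwgnn : ∀ θ ∈ Set.Icc (0 : ℝ) π, 0 ≤ wg θ)
    (hmono : AntitoneOn (fun θ => ws θ * wg θ) (Set.Icc (0 : ℝ) π))
    (hW00 : ∀ x y : ℝ, 0 < Wfun ws wg Δ h 0 0 x y)
    {x y : ℝ} (hx : x ∈ Set.Icc (-(Δ/2)) (Δ/2))
    (hy : y ∈ Set.Icc (-(Real.sqrt 3 * Δ / 2)) (Real.sqrt 3 * Δ / 2))
    {i j : ℤ} (hpar : i % 2 = j % 2)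
    (hcv : ConvexOn ℝ (Set.Icc (-(Δ/2)) (Δ/2))
      (fun x => Wfun ws wg Δ h i j x y / Wfun ws wg Δ h 0 0 x y)) :
    2 * (pw ws wg Δ h α i j 0 y / pw ws wg Δ h α 0 0 0 y)
      ≤ pw ws wg Δ h α i j x y / pw ws wg Δ h α 0 0 x y
        + pw ws wg Δ h α i j (-x) y / pw ws wg Δ h α 0 0 (-x) y := by
  have hα0 : (0:ℝ) ≤ α := by linarith
  rw [pw_div hh, pw_div hh, pw_div hh]
  -- the six squares
  have e1 : Dfun Δ h 0 0 x y ^ 2 = x^2 + (y^2 + h^2) := by rw [Dfun_sq]; push_cast; ring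
  have e2 : Dfun Δ h i j x y ^ 2
      = (x - (i:ℝ)*Δ/2)^2 + ((y - (j:ℝ)*Real.sqrt 3*Δ/2)^2 + h^2) := by
    rw [Dfun_sq]; push_cast; ring
  have e3 : Dfun Δ h 0 0 (-x) y ^ 2 = x^2 + (y^2 + h^2) := by rw [Dfun_sq]; push_cast; ring
  have e4 : Dfun Δ h i j (-x) y ^ 2
      = (-x - (i:ℝ)*Δ/2)^2 + ((y - (j:ℝ)*Real.sqrt 3*Δ/2)^2 + h^2) := by
    rw [Dfun_sq]; push_cast; ring
  have e5 : Dfun Δ h 0 0 0 y ^ 2 = y^2 + h^2 := by rw [Dfun_sq]; push_cast; ring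
  have e6 : Dfun Δ h i j 0 y ^ 2
      = ((i:ℝ)*Δ/2)^2 + ((y - (j:ℝ)*Real.sqrt 3*Δ/2)^2 + h^2) := by
    rw [Dfun_sq]; push_cast; ring
  have hx2 : x^2 ≤ (Δ/2)^2 := sq_le_sq' hx.1 hx.2
  have hy2 : y^2 ≤ (Real.sqrt 3*Δ/2)^2 := sq_le_sq' (by linarith [hy.1]) (by linarith [hy.2])
  -- midpoint bound for the distance-ratio factor
  have hma : 2 * ((Dfun Δ h 0 0 0 y / Dfun Δ h i j 0 y) ^ α)
      ≤ (Dfun Δ h 0 0 x y / Dfun Δ h i j x y) ^ α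
        + (Dfun Δ h 0 0 (-x) y / Dfun Δ h i j (-x) y) ^ α := by
    rw [rpow_ratio_sq hα0 (Dfun_pos hh Δ 0 0 0 y).le (Dfun_pos hh Δ i j 0 y),
        rpow_ratio_sq hα0 (Dfun_pos hh Δ 0 0 x y).le (Dfun_pos hh Δ i j x y),
        rpow_ratio_sq hα0 (Dfun_pos hh Δ 0 0 (-x) y).le (Dfun_pos hh Δ i j (-x) y),
        e1, e2, e3, e4, e5, e6]
    exact ratio_rpow (by linarith) (by positivity) (by positivity) (by positivity)
      (ratio_quad (by positivity) (by positivity) (key_poly hΔ hpar hx2 hy2))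
  -- midpoint bound for the gain-ratio factor
  have hmb : 2 * (Wfun ws wg Δ h i j 0 y / Wfun ws wg Δ h 0 0 0 y)
      ≤ Wfun ws wg Δ h i j x y / Wfun ws wg Δ h 0 0 x y
        + Wfun ws wg Δ h i j (-x) y / Wfun ws wg Δ h 0 0 (-x) y := by
    have hmem2 : -x ∈ Set.Icc (-(Δ/2)) (Δ/2) := ⟨by linarith [hx.2], by linarith [hx.1]⟩
    have h12 := hcv.2 hx hmem2 (by norm_num : (0:ℝ) ≤ 1/2) (by norm_num : (0:ℝ) ≤ 1/2)
      (by norm_num)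
    simp only [smul_eq_mul] at h12
    have h0 : (1/2:ℝ) * x + (1/2:ℝ) * (-x) = 0 := by ring
    rw [h0] at h12
    linarith
  -- comonotonicity
  have hDeq00 : Dfun Δ h 0 0 (-x) y = Dfun Δ h 0 0 x y := Dfun_eq (by push_cast; ring) rfl
  have hcom : 0 ≤ ((Dfun Δ h 0 0 x y / Dfun Δ h i j x y) ^ α
        - (Dfun Δ h 0 0 (-x) y / Dfun Δ h i j (-x) y) ^ α)
      * (Wfun ws wg Δ h i j x y / Wfun ws wg Δ h 0 0 x y
        - Wfun ws wg Δ h i j (-x) y / Wfun ws wg Δ h 0 0 (-x) y) := by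
    rcases le_total (Dfun Δ h i j x y) (Dfun Δ h i j (-x) y) with hDD | hDD
    · apply mul_nonneg
      · rw [sub_nonneg, hDeq00]
        exact Real.rpow_le_rpow
          (div_nonneg (Dfun_pos hh Δ 0 0 x y).le (Dfun_pos hh Δ i j (-x) y).le)
          (div_le_div_of_nonneg_left (Dfun_pos hh Δ 0 0 x y).le (Dfun_pos hh Δ i j x y) hDD) hα0
      · rw [sub_nonneg, Wfun_congr hDeq00]
        exact div_le_div_of_nonneg_right (Wfun_le_Wfun hmono hh hDD) (hW00 x y).le
    · apply mul_nonneg_iff.mpr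
      right
      constructor
      · rw [sub_nonpos, hDeq00]
        exact Real.rpow_le_rpow
          (div_nonneg (Dfun_pos hh Δ 0 0 x y).le (Dfun_pos hh Δ i j x y).le)
          (div_le_div_of_nonneg_left (Dfun_pos hh Δ 0 0 x y).le (Dfun_pos hh Δ i j (-x) y) hDD) hα0
      · rw [sub_nonpos, Wfun_congr hDeq00]
        exact div_le_div_of_nonneg_right (Wfun_le_Wfun hmono hh hDD) (hW00 x y).le
  exact cheb_prod
    (Real.rpow_nonneg (div_nonneg (Dfun_pos hh Δ 0 0 x y).le (Dfun_pos hh Δ i j x y).le) α)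
    (Real.rpow_nonneg (div_nonneg (Dfun_pos hh Δ 0 0 (-x) y).le (Dfun_pos hh Δ i j (-x) y).le) α)
    (div_nonneg (Wfun_nonneg hwsnn hwgnn Δ h i j x y) (hW00 x y).le)
    (div_nonneg (Wfun_nonneg hwsnn hwgnn Δ h i j (-x) y) (hW00 (-x) y).le)
    (Real.rpow_nonneg (div_nonneg (Dfun_pos hh Δ 0 0 0 y).le (Dfun_pos hh Δ i j 0 y).le) α)
    (div_nonneg (Wfun_nonneg hwsnn hwgnn Δ h i j 0 y) (hW00 0 y).le)
    hcom hma hmb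

end MidTerm


set_option maxHeartbeats 1000000 in
/-- per-term midpoint inequality in the y direction (at x = 0) -/
lemma midterm_y (hΔ : 0 < Δ) (hh : 0 < h) (hα : 2 ≤ α)
    (hwsnn : ∀ θ ∈ Set.Icc (0 : ℝ) π, 0 ≤ ws θ)
    (hwgnn : ∀ θ ∈ Set.Icc (0 : ℝ) π, 0 ≤ wg θ)
    (hmono : AntitoneOn (fun θ => ws θ * wg θ) (Set.Icc (0 : ℝ) π))
    (hW00 : ∀ x y : ℝ, 0 < Wfun ws wg Δ h 0 0 x y)
    {y : ℝ} (hy : y ∈ Set.Icc (-(Real.sqrt 3 * Δ / 2)) (Real.sqrt 3 * Δ / 2))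
    {i j : ℤ}
    (hcv : ConvexOn ℝ (Set.Icc (-(Real.sqrt 3 * Δ / 2)) (Real.sqrt 3 * Δ / 2))
      (fun y => Wfun ws wg Δ h i j 0 y / Wfun ws wg Δ h 0 0 0 y)) :
    2 * (pw ws wg Δ h α i j 0 0 / pw ws wg Δ h α 0 0 0 0)
      ≤ pw ws wg Δ h α i j 0 y / pw ws wg Δ h α 0 0 0 y
        + pw ws wg Δ h α i j 0 (-y) / pw ws wg Δ h α 0 0 0 (-y) := by
  have hα0 : (0:ℝ) ≤ α := by linarith
  rw [pw_div hh, pw_div hh, pw_div hh]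
  have e1 : Dfun Δ h 0 0 0 y ^ 2 = y^2 + h^2 := by rw [Dfun_sq]; push_cast; ring
  have e2 : Dfun Δ h i j 0 y ^ 2
      = (y - (j:ℝ)*Real.sqrt 3*Δ/2)^2 + (((i:ℝ)*Δ/2)^2 + h^2) := by
    rw [Dfun_sq]; push_cast; ring
  have e3 : Dfun Δ h 0 0 0 (-y) ^ 2 = y^2 + h^2 := by rw [Dfun_sq]; push_cast; ring
  have e4 : Dfun Δ h i j 0 (-y) ^ 2
      = (-y - (j:ℝ)*Real.sqrt 3*Δ/2)^2 + (((i:ℝ)*Δ/2)^2 + h^2) := by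
    rw [Dfun_sq]; push_cast; ring
  have e5 : Dfun Δ h 0 0 0 0 ^ 2 = h^2 := by rw [Dfun_sq]; push_cast; ring
  have e6 : Dfun Δ h i j 0 0 ^ 2
      = ((j:ℝ)*Real.sqrt 3*Δ/2)^2 + (((i:ℝ)*Δ/2)^2 + h^2) := by
    rw [Dfun_sq]; push_cast; ring
  have hma : 2 * ((Dfun Δ h 0 0 0 0 / Dfun Δ h i j 0 0) ^ α)
      ≤ (Dfun Δ h 0 0 0 y / Dfun Δ h i j 0 y) ^ α
        + (Dfun Δ h 0 0 0 (-y) / Dfun Δ h i j 0 (-y)) ^ α := by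
    rw [rpow_ratio_sq hα0 (Dfun_pos hh Δ 0 0 0 0).le (Dfun_pos hh Δ i j 0 0),
        rpow_ratio_sq hα0 (Dfun_pos hh Δ 0 0 0 y).le (Dfun_pos hh Δ i j 0 y),
        rpow_ratio_sq hα0 (Dfun_pos hh Δ 0 0 0 (-y)).le (Dfun_pos hh Δ i j 0 (-y)),
        e1, e2, e3, e4, e5, e6]
    have hK : 0 ≤ (y^2 + (((j:ℝ)*Real.sqrt 3*Δ/2)^2 + (((i:ℝ)*Δ/2)^2 + h^2)))
        * ((((j:ℝ)*Real.sqrt 3*Δ/2)^2 + (((i:ℝ)*Δ/2)^2 + h^2)) - h^2)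
        + 4*h^2*(((j:ℝ)*Real.sqrt 3*Δ/2)^2) := by
      have h1 : (0:ℝ) ≤ ((j:ℝ)*Real.sqrt 3*Δ/2)^2 + ((i:ℝ)*Δ/2)^2 := by positivity
      have h2 : (0:ℝ) ≤ y^2 + (((j:ℝ)*Real.sqrt 3*Δ/2)^2 + (((i:ℝ)*Δ/2)^2 + h^2)) := by
        positivity
      nlinarith [mul_nonneg h2 h1, sq_nonneg ((j:ℝ)*Real.sqrt 3*Δ/2), sq_nonneg h]
    exact ratio_rpow (by linarith) (by positivity) (by positivity) (by positivity)
      (ratio_quad (by positivity) (by positivity) hK)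
  have hmb : 2 * (Wfun ws wg Δ h i j 0 0 / Wfun ws wg Δ h 0 0 0 0)
      ≤ Wfun ws wg Δ h i j 0 y / Wfun ws wg Δ h 0 0 0 y
        + Wfun ws wg Δ h i j 0 (-y) / Wfun ws wg Δ h 0 0 0 (-y) := by
    have hmem2 : -y ∈ Set.Icc (-(Real.sqrt 3 * Δ / 2)) (Real.sqrt 3 * Δ / 2) :=
      ⟨by linarith [hy.2], by linarith [hy.1]⟩
    have h12 := hcv.2 hy hmem2 (by norm_num : (0:ℝ) ≤ 1/2) (by norm_num : (0:ℝ) ≤ 1/2)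
      (by norm_num)
    simp only [smul_eq_mul] at h12
    have h0 : (1/2:ℝ) * y + (1/2:ℝ) * (-y) = 0 := by ring
    rw [h0] at h12
    linarith
  have hDeq00 : Dfun Δ h 0 0 0 (-y) = Dfun Δ h 0 0 0 y := Dfun_eq rfl (by push_cast; ring)
  have hcom : 0 ≤ ((Dfun Δ h 0 0 0 y / Dfun Δ h i j 0 y) ^ α
        - (Dfun Δ h 0 0 0 (-y) / Dfun Δ h i j 0 (-y)) ^ α)
      * (Wfun ws wg Δ h i j 0 y / Wfun ws wg Δ h 0 0 0 y
        - Wfun ws wg Δ h i j 0 (-y) / Wfun ws wg Δ h 0 0 0 (-y)) := by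
    rcases le_total (Dfun Δ h i j 0 y) (Dfun Δ h i j 0 (-y)) with hDD | hDD
    · apply mul_nonneg
      · rw [sub_nonneg, hDeq00]
        exact Real.rpow_le_rpow
          (div_nonneg (Dfun_pos hh Δ 0 0 0 y).le (Dfun_pos hh Δ i j 0 (-y)).le)
          (div_le_div_of_nonneg_left (Dfun_pos hh Δ 0 0 0 y).le (Dfun_pos hh Δ i j 0 y) hDD) hα0
      · rw [sub_nonneg, Wfun_congr hDeq00]
        exact div_le_div_of_nonneg_right (Wfun_le_Wfun hmono hh hDD) (hW00 0 y).le
    · apply mul_nonneg_iff.mpr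
      right
      constructor
      · rw [sub_nonpos, hDeq00]
        exact Real.rpow_le_rpow
          (div_nonneg (Dfun_pos hh Δ 0 0 0 y).le (Dfun_pos hh Δ i j 0 y).le)
          (div_le_div_of_nonneg_left (Dfun_pos hh Δ 0 0 0 y).le (Dfun_pos hh Δ i j 0 (-y)) hDD) hα0
      · rw [sub_nonpos, Wfun_congr hDeq00]
        exact div_le_div_of_nonneg_right (Wfun_le_Wfun hmono hh hDD) (hW00 0 y).le
  exact cheb_prod
    (Real.rpow_nonneg (div_nonneg (Dfun_pos hh Δ 0 0 0 y).le (Dfun_pos hh Δ i j 0 y).le) α)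
    (Real.rpow_nonneg (div_nonneg (Dfun_pos hh Δ 0 0 0 (-y)).le (Dfun_pos hh Δ i j 0 (-y)).le) α)
    (div_nonneg (Wfun_nonneg hwsnn hwgnn Δ h i j 0 y) (hW00 0 y).le)
    (div_nonneg (Wfun_nonneg hwsnn hwgnn Δ h i j 0 (-y)) (hW00 0 (-y)).le)
    (Real.rpow_nonneg (div_nonneg (Dfun_pos hh Δ 0 0 0 0).le (Dfun_pos hh Δ i j 0 0).le) α)
    (div_nonneg (Wfun_nonneg hwsnn hwgnn Δ h i j 0 0) (hW00 0 0).le)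
    hcom hma hmb


section Steps23

variable {ws wg : ℝ → ℝ} {Δ h α p σ2 : ℝ}

lemma inv_SINR (ws wg : ℝ → ℝ) (Δ h α p σ2 x y : ℝ) :
    SINR ws wg Δ h α p σ2 x y = ((INR ws wg Δ h α p σ2 x y + 1) / SNR ws wg Δ h α p σ2 x y)⁻¹ := by
  rw [SINR, inv_div]

lemma H_rw (hh : 0 < h) (hp : 0 < p) (hσ : 0 < σ2)
    (hW00 : ∀ x y : ℝ, 0 < Wfun ws wg Δ h 0 0 x y) (x y : ℝ) :
    (INR ws wg Δ h α p σ2 x y + 1) / SNR ws wg Δ h α p σ2 x y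
      = (∑' q : ℤ × ℤ, Fq ws wg Δ h α x y q / pw ws wg Δ h α 0 0 x y)
        + 1 / ((p/σ2) * pw ws wg Δ h α 0 0 x y) := by
  have hA : (0:ℝ) < p / σ2 := div_pos hp hσ
  rw [INR_eq, SNR_eq, add_div, mul_div_mul_left _ _ (ne_of_gt hA), tsum_div_const]

set_option maxHeartbeats 1000000 in
lemma step2 (hΔ : 0 < Δ) (hh : 0 < h) (hα : 2 ≤ α) (hp : 0 < p) (hσ : 0 < σ2)
    (hwsnn : ∀ θ ∈ Set.Icc (0 : ℝ) π, 0 ≤ ws θ)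
    (hwgnn : ∀ θ ∈ Set.Icc (0 : ℝ) π, 0 ≤ wg θ)
    (hsum : ∀ x y : ℝ, Summable fun q : ℤ × ℤ =>
      if q.1 % 2 = q.2 % 2 ∧ q ≠ (0, 0) then
        Dfun Δ h q.1 q.2 x y ^ (-α) * Wfun ws wg Δ h q.1 q.2 x y
      else 0)
    (hmono : AntitoneOn (fun θ => ws θ * wg θ) (Set.Icc (0 : ℝ) π))
    (hW00 : ∀ x y : ℝ, 0 < Wfun ws wg Δ h 0 0 x y)
    (hconvx : ∀ i j : ℤ, i % 2 = j % 2 → (i, j) ≠ ((0 : ℤ), (0 : ℤ)) →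
      ∀ y ∈ Set.Icc (-(Real.sqrt 3 * Δ / 2)) (Real.sqrt 3 * Δ / 2),
        ConvexOn ℝ (Set.Icc (-(Δ / 2)) (Δ / 2))
          (fun x => Wfun ws wg Δ h i j x y / Wfun ws wg Δ h 0 0 x y))
    {x y : ℝ} (hx : x ∈ Set.Icc (-(Δ/2)) (Δ/2))
    (hy : y ∈ Set.Icc (-(Real.sqrt 3 * Δ / 2)) (Real.sqrt 3 * Δ / 2)) :
    SINR ws wg Δ h α p σ2 x y ≤ SINR ws wg Δ h α p σ2 0 y := by
  have hα0 : (0:ℝ) ≤ α := by linarith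
  have hA : (0:ℝ) < p / σ2 := div_pos hp hσ
  have hsT : ∀ u v : ℝ, Summable (fun q : ℤ × ℤ =>
      Fq ws wg Δ h α u v q / pw ws wg Δ h α 0 0 u v) :=
    fun u v => (summable_Fq (ws := ws) (wg := wg) hsum u v).div_const _
  -- pointwise bound
  have hterm : ∀ q : ℤ × ℤ,
      2 * (Fq ws wg Δ h α 0 y q / pw ws wg Δ h α 0 0 0 y)
        ≤ Fq ws wg Δ h α x y q / pw ws wg Δ h α 0 0 x y
          + Fq ws wg Δ h α (-x) y q / pw ws wg Δ h α 0 0 (-x) y := by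
    intro q
    by_cases hc : q.1 % 2 = q.2 % 2 ∧ q ≠ ((0:ℤ), (0:ℤ))
    · obtain ⟨i, j⟩ := q
      have hFq : ∀ u v : ℝ, Fq ws wg Δ h α u v (i, j) = pw ws wg Δ h α i j u v := by
        intro u v; simp only [Fq, pw, if_pos hc]
      rw [hFq, hFq, hFq]
      exact midterm_x hΔ hh hα hwsnn hwgnn hmono hW00 hx hy hc.1
        (hconvx i j hc.1 hc.2 y hy)
    · simp only [Fq, if_neg hc, zero_div]
      norm_num
  have h2 := Summable.tsum_le_tsum hterm ((hsT 0 y).mul_left 2) ((hsT x y).add (hsT (-x) y))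
  rw [tsum_mul_left, Summable.tsum_add (hsT x y) (hsT (-x) y)] at h2
  -- reflection identity
  have hD00e : Dfun Δ h 0 0 (-x) y = Dfun Δ h 0 0 x y := Dfun_eq (by push_cast; ring) rfl
  have hrefl : (∑' q : ℤ × ℤ, Fq ws wg Δ h α (-x) y q / pw ws wg Δ h α 0 0 (-x) y)
      = ∑' q : ℤ × ℤ, Fq ws wg Δ h α x y q / pw ws wg Δ h α 0 0 x y := by
    have hsEq : pw ws wg Δ h α 0 0 (-x) y = pw ws wg Δ h α 0 0 x y := pw_congr hD00e
    have hpt : ∀ q : ℤ × ℤ, Fq ws wg Δ h α x y (negFst q) = Fq ws wg Δ h α (-x) y q := by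
      intro q
      have hnf : negFst q = (-q.1, q.2) := rfl
      rw [hnf]
      by_cases hc : q.1 % 2 = q.2 % 2 ∧ q ≠ ((0:ℤ), (0:ℤ))
      · have hc' : (-q.1) % 2 = q.2 % 2 ∧ ((-q.1, q.2) : ℤ × ℤ) ≠ ((0:ℤ), (0:ℤ)) := by
          obtain ⟨h1, h2⟩ := hc
          constructor
          · omega
          · intro hcon
            apply h2
            have : -q.1 = 0 ∧ q.2 = 0 := Prod.mk_inj.mp hcon
            have hq : q = (q.1, q.2) := rfl
            rw [hq, Prod.mk_inj]
            omega
        rw [Fq, Fq, if_pos hc', if_pos (by simpa using hc)]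
        simp only
        have hDe : Dfun Δ h (-q.1) q.2 x y = Dfun Δ h q.1 q.2 (-x) y :=
          Dfun_eq (by push_cast; ring) rfl
        rw [hDe, Wfun_congr hDe]
      · have hc' : ¬((-q.1) % 2 = q.2 % 2 ∧ ((-q.1, q.2) : ℤ × ℤ) ≠ ((0:ℤ), (0:ℤ))) := by
          intro hcon
          apply hc
          obtain ⟨h1, h2⟩ := hcon
          constructor
          · omega
          · intro hq0
            apply h2
            have : q.1 = 0 ∧ q.2 = 0 := by
              constructor
              · exact congrArg Prod.fst hq0
              · exact congrArg Prod.snd hq0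
            rw [Prod.mk_inj]
            omega
        rw [Fq, Fq, if_neg hc', if_neg (by simpa using hc)]
    rw [hsEq]
    calc (∑' q : ℤ × ℤ, Fq ws wg Δ h α (-x) y q / pw ws wg Δ h α 0 0 x y)
        = ∑' q : ℤ × ℤ, Fq ws wg Δ h α x y (negFst q) / pw ws wg Δ h α 0 0 x y := by
          apply tsum_congr
          intro q
          rw [hpt]
    _ = ∑' q : ℤ × ℤ, Fq ws wg Δ h α x y q / pw ws wg Δ h α 0 0 x y :=
          negFst.tsum_eq (fun q => Fq ws wg Δ h α x y q / pw ws wg Δ h α 0 0 x y)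
  rw [hrefl] at h2
  -- tail term
  have hDle : Dfun Δ h 0 0 0 y ≤ Dfun Δ h 0 0 x y := by
    apply Dfun_le_Dfun
    push_cast
    nlinarith [sq_nonneg x]
  have hs_le : pw ws wg Δ h α 0 0 x y ≤ pw ws wg Δ h α 0 0 0 y :=
    pw_le_pw hmono hwsnn hwgnn hh hα0 hDle
  have hkey : (INR ws wg Δ h α p σ2 0 y + 1) / SNR ws wg Δ h α p σ2 0 y
      ≤ (INR ws wg Δ h α p σ2 x y + 1) / SNR ws wg Δ h α p σ2 x y := by
    rw [H_rw hh hp hσ hW00, H_rw hh hp hσ hW00]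
    have htail : 1 / ((p/σ2) * pw ws wg Δ h α 0 0 0 y)
        ≤ 1 / ((p/σ2) * pw ws wg Δ h α 0 0 x y) := by
      apply one_div_le_one_div_of_le
      · exact mul_pos hA (pw_pos00 hh (hW00 x y))
      · exact mul_le_mul_of_nonneg_left hs_le hA.le
    linarith
  rw [inv_SINR, inv_SINR]
  apply inv_anti₀ _ hkey
  apply div_pos
  · have : (0:ℝ) ≤ INR ws wg Δ h α p σ2 0 y := by
      rw [INR_eq]
      exact mul_nonneg hA.le (tsum_nonneg (fun q => Fq_nonneg hwsnn hwgnn 0 y q))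
    linarith
  · rw [SNR_eq]
    exact mul_pos hA (pw_pos00 hh (hW00 0 y))


set_option maxHeartbeats 1000000 in
lemma step3 (hΔ : 0 < Δ) (hh : 0 < h) (hα : 2 ≤ α) (hp : 0 < p) (hσ : 0 < σ2)
    (hwsnn : ∀ θ ∈ Set.Icc (0 : ℝ) π, 0 ≤ ws θ)
    (hwgnn : ∀ θ ∈ Set.Icc (0 : ℝ) π, 0 ≤ wg θ)
    (hsum : ∀ x y : ℝ, Summable fun q : ℤ × ℤ =>
      if q.1 % 2 = q.2 % 2 ∧ q ≠ (0, 0) then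
        Dfun Δ h q.1 q.2 x y ^ (-α) * Wfun ws wg Δ h q.1 q.2 x y
      else 0)
    (hmono : AntitoneOn (fun θ => ws θ * wg θ) (Set.Icc (0 : ℝ) π))
    (hW00 : ∀ x y : ℝ, 0 < Wfun ws wg Δ h 0 0 x y)
    (hconvy : ∀ i j : ℤ, i % 2 = j % 2 → (i, j) ≠ ((0 : ℤ), (0 : ℤ)) →
      ∀ x ∈ Set.Icc (-(Δ / 2)) (Δ / 2),
        ConvexOn ℝ (Set.Icc (-(Real.sqrt 3 * Δ / 2)) (Real.sqrt 3 * Δ / 2))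
          (fun y => Wfun ws wg Δ h i j x y / Wfun ws wg Δ h 0 0 x y))
    {y : ℝ} (hy : y ∈ Set.Icc (-(Real.sqrt 3 * Δ / 2)) (Real.sqrt 3 * Δ / 2)) :
    SINR ws wg Δ h α p σ2 0 y ≤ SINR ws wg Δ h α p σ2 0 0 := by
  have hα0 : (0:ℝ) ≤ α := by linarith
  have hA : (0:ℝ) < p / σ2 := div_pos hp hσ
  have hmem0 : (0:ℝ) ∈ Set.Icc (-(Δ/2)) (Δ/2) := by
    constructor <;> [linarith; linarith]
  have hsT : ∀ u v : ℝ, Summable (fun q : ℤ × ℤ =>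
      Fq ws wg Δ h α u v q / pw ws wg Δ h α 0 0 u v) :=
    fun u v => (summable_Fq (ws := ws) (wg := wg) hsum u v).div_const _
  have hterm : ∀ q : ℤ × ℤ,
      2 * (Fq ws wg Δ h α 0 0 q / pw ws wg Δ h α 0 0 0 0)
        ≤ Fq ws wg Δ h α 0 y q / pw ws wg Δ h α 0 0 0 y
          + Fq ws wg Δ h α 0 (-y) q / pw ws wg Δ h α 0 0 0 (-y) := by
    intro q
    by_cases hc : q.1 % 2 = q.2 % 2 ∧ q ≠ ((0:ℤ), (0:ℤ))
    · obtain ⟨i, j⟩ := q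
      have hFq : ∀ u v : ℝ, Fq ws wg Δ h α u v (i, j) = pw ws wg Δ h α i j u v := by
        intro u v; simp only [Fq, pw, if_pos hc]
      rw [hFq, hFq, hFq]
      exact midterm_y hΔ hh hα hwsnn hwgnn hmono hW00 hy (hconvy i j hc.1 hc.2 0 hmem0)
    · simp only [Fq, if_neg hc, zero_div]
      norm_num
  have h2 := Summable.tsum_le_tsum hterm ((hsT 0 0).mul_left 2) ((hsT 0 y).add (hsT 0 (-y)))
  rw [tsum_mul_left, Summable.tsum_add (hsT 0 y) (hsT 0 (-y))] at h2
  have hD00e : Dfun Δ h 0 0 0 (-y) = Dfun Δ h 0 0 0 y := Dfun_eq rfl (by push_cast; ring)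
  have hrefl : (∑' q : ℤ × ℤ, Fq ws wg Δ h α 0 (-y) q / pw ws wg Δ h α 0 0 0 (-y))
      = ∑' q : ℤ × ℤ, Fq ws wg Δ h α 0 y q / pw ws wg Δ h α 0 0 0 y := by
    have hsEq : pw ws wg Δ h α 0 0 0 (-y) = pw ws wg Δ h α 0 0 0 y := pw_congr hD00e
    have hpt : ∀ q : ℤ × ℤ, Fq ws wg Δ h α 0 y (negSnd q) = Fq ws wg Δ h α 0 (-y) q := by
      intro q
      have hnf : negSnd q = (q.1, -q.2) := rfl
      rw [hnf]
      by_cases hc : q.1 % 2 = q.2 % 2 ∧ q ≠ ((0:ℤ), (0:ℤ))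
      · have hc' : q.1 % 2 = (-q.2) % 2 ∧ ((q.1, -q.2) : ℤ × ℤ) ≠ ((0:ℤ), (0:ℤ)) := by
          obtain ⟨h1, h2⟩ := hc
          constructor
          · omega
          · intro hcon
            apply h2
            have : q.1 = 0 ∧ -q.2 = 0 := Prod.mk_inj.mp hcon
            have hq : q = (q.1, q.2) := rfl
            rw [hq, Prod.mk_inj]
            omega
        rw [Fq, Fq, if_pos hc', if_pos (by simpa using hc)]
        simp only
        have hDe : Dfun Δ h q.1 (-q.2) 0 y = Dfun Δ h q.1 q.2 0 (-y) :=
          Dfun_eq rfl (by push_cast; ring)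
        rw [hDe, Wfun_congr hDe]
      · have hc' : ¬(q.1 % 2 = (-q.2) % 2 ∧ ((q.1, -q.2) : ℤ × ℤ) ≠ ((0:ℤ), (0:ℤ))) := by
          intro hcon
          apply hc
          obtain ⟨h1, h2⟩ := hcon
          constructor
          · omega
          · intro hq0
            apply h2
            have : q.1 = 0 ∧ q.2 = 0 := by
              constructor
              · exact congrArg Prod.fst hq0
              · exact congrArg Prod.snd hq0
            rw [Prod.mk_inj]
            omega
        rw [Fq, Fq, if_neg hc', if_neg (by simpa using hc)]
    rw [hsEq]
    calc (∑' q : ℤ × ℤ, Fq ws wg Δ h α 0 (-y) q / pw ws wg Δ h α 0 0 0 y)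
        = ∑' q : ℤ × ℤ, Fq ws wg Δ h α 0 y (negSnd q) / pw ws wg Δ h α 0 0 0 y := by
          apply tsum_congr
          intro q
          rw [hpt]
    _ = ∑' q : ℤ × ℤ, Fq ws wg Δ h α 0 y q / pw ws wg Δ h α 0 0 0 y :=
          negSnd.tsum_eq (fun q => Fq ws wg Δ h α 0 y q / pw ws wg Δ h α 0 0 0 y)
  rw [hrefl] at h2
  have hDle : Dfun Δ h 0 0 0 0 ≤ Dfun Δ h 0 0 0 y := by
    apply Dfun_le_Dfun
    push_cast
    nlinarith [sq_nonneg y]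
  have hs_le : pw ws wg Δ h α 0 0 0 y ≤ pw ws wg Δ h α 0 0 0 0 :=
    pw_le_pw hmono hwsnn hwgnn hh hα0 hDle
  have hkey : (INR ws wg Δ h α p σ2 0 0 + 1) / SNR ws wg Δ h α p σ2 0 0
      ≤ (INR ws wg Δ h α p σ2 0 y + 1) / SNR ws wg Δ h α p σ2 0 y := by
    rw [H_rw hh hp hσ hW00, H_rw hh hp hσ hW00]
    have htail : 1 / ((p/σ2) * pw ws wg Δ h α 0 0 0 0)
        ≤ 1 / ((p/σ2) * pw ws wg Δ h α 0 0 0 y) := by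
      apply one_div_le_one_div_of_le
      · exact mul_pos hA (pw_pos00 hh (hW00 0 y))
      · exact mul_le_mul_of_nonneg_left hs_le hA.le
    linarith
  rw [inv_SINR, inv_SINR]
  apply inv_anti₀ _ hkey
  apply div_pos
  · have : (0:ℝ) ≤ INR ws wg Δ h α p σ2 0 0 := by
      rw [INR_eq]
      exact mul_nonneg hA.le (tsum_nonneg (fun q => Fq_nonneg hwsnn hwgnn 0 0 q))
    linarith
  · rw [SNR_eq]
    exact mul_pos hA (pw_pos00 hh (hW00 0 0))

end Steps23


lemma sq_shift {c : ℝ} (hc : 0 < c) (m : ℤ) {a : ℝ} (hb : |a - m*c| ≤ c/2) :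
    (a - m*c)^2 ≤ a^2 := by
  obtain ⟨h1, h2⟩ := abs_le.mp hb
  rcases lt_trichotomy m 0 with hm | hm | hm
  · have hm1 : (m:ℝ) ≤ -1 := by exact_mod_cast (by omega : m ≤ -1)
    nlinarith [mul_nonneg (by nlinarith : (0:ℝ) ≤ -((m:ℝ)*c))
      (by nlinarith : (0:ℝ) ≤ -(2*(a - m*c) + (m:ℝ)*c))]
  · rw [hm]
    push_cast
    nlinarith [sq_nonneg a]
  · have hm1 : (1:ℝ) ≤ (m:ℝ) := by exact_mod_cast (by omega : 1 ≤ m)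
    nlinarith [mul_nonneg (by nlinarith : (0:ℝ) ≤ (m:ℝ)*c)
      (by nlinarith : (0:ℝ) ≤ 2*(a - m*c) + (m:ℝ)*c)]

theorem sinr_maximized_below_satellite
    (ws wg : ℝ → ℝ) (Δ h α p σ2 : ℝ)
    (hΔ : 0 < Δ) (hh : 0 < h) (hα : 2 ≤ α) (hp : 0 < p) (hσ : 0 < σ2)
    (hwsnn : ∀ θ ∈ Set.Icc (0 : ℝ) π, 0 ≤ ws θ)
    (hwgnn : ∀ θ ∈ Set.Icc (0 : ℝ) π, 0 ≤ wg θ)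
    (hsum : ∀ x y : ℝ, Summable fun q : ℤ × ℤ =>
      if q.1 % 2 = q.2 % 2 ∧ q ≠ (0, 0) then
        Dfun Δ h q.1 q.2 x y ^ (-α) * Wfun ws wg Δ h q.1 q.2 x y
      else 0)
    -- (i) θ ↦ w_s(θ)·w_g(θ) is nonincreasing on [0, π] and W₀₀ > 0 everywhere
    (hmono : AntitoneOn (fun θ => ws θ * wg θ) (Set.Icc (0 : ℝ) π))
    (hW00 : ∀ x y : ℝ, 0 < Wfun ws wg Δ h 0 0 x y)
    -- (ii) the ratio W_{i,j}/W_{0,0} is convex in x and in y on the central cell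
    (hconvx : ∀ i j : ℤ, i % 2 = j % 2 → (i, j) ≠ ((0 : ℤ), (0 : ℤ)) →
      ∀ y ∈ Set.Icc (-(Real.sqrt 3 * Δ / 2)) (Real.sqrt 3 * Δ / 2),
        ConvexOn ℝ (Set.Icc (-(Δ / 2)) (Δ / 2))
          (fun x => Wfun ws wg Δ h i j x y / Wfun ws wg Δ h 0 0 x y))
    (hconvy : ∀ i j : ℤ, i % 2 = j % 2 → (i, j) ≠ ((0 : ℤ), (0 : ℤ)) →
      ∀ x ∈ Set.Icc (-(Δ / 2)) (Δ / 2),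
        ConvexOn ℝ (Set.Icc (-(Real.sqrt 3 * Δ / 2)) (Real.sqrt 3 * Δ / 2))
          (fun y => Wfun ws wg Δ h i j x y / Wfun ws wg Δ h 0 0 x y)) :
    ∀ x y : ℝ, SINR ws wg Δ h α p σ2 x y ≤ SINR ws wg Δ h α p σ2 0 0 := by
  intro x y
  have hS3 : (0:ℝ) < Real.sqrt 3 * Δ := by positivity
  set m := round (x/Δ) with hm
  set n := round (y/(Real.sqrt 3 * Δ)) with hn
  have hxb : |x - m*Δ| ≤ Δ/2 := by
    have h1 := abs_sub_round (x/Δ)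
    have h2 : x - m*Δ = (x/Δ - m)*Δ := by field_simp
    rw [h2, abs_mul, abs_of_pos hΔ]
    calc |x/Δ - m| * Δ ≤ (1/2) * Δ := mul_le_mul_of_nonneg_right h1 hΔ.le
    _ = Δ/2 := by ring
  have hyb : |y - n*(Real.sqrt 3*Δ)| ≤ (Real.sqrt 3*Δ)/2 := by
    have h1 := abs_sub_round (y/(Real.sqrt 3*Δ))
    have h2 : y - n*(Real.sqrt 3*Δ) = (y/(Real.sqrt 3*Δ) - n)*(Real.sqrt 3*Δ) := by
      field_simp
    rw [h2, abs_mul, abs_of_pos hS3]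
    calc |y/(Real.sqrt 3*Δ) - n| * (Real.sqrt 3*Δ)
        ≤ (1/2) * (Real.sqrt 3*Δ) := mul_le_mul_of_nonneg_right h1 hS3.le
    _ = (Real.sqrt 3*Δ)/2 := by ring
  have hx2 : (x - m*Δ)^2 ≤ x^2 := sq_shift hΔ m hxb
  have hy2 : (y - n*(Real.sqrt 3*Δ))^2 ≤ y^2 := sq_shift hS3 n hyb
  have hxmem : (x - m*Δ) ∈ Set.Icc (-(Δ/2)) (Δ/2) := by
    obtain ⟨ha, hb⟩ := abs_le.mp hxb
    exact ⟨ha, hb⟩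
  have hymem : (y - n*(Real.sqrt 3*Δ)) ∈ Set.Icc (-(Real.sqrt 3 * Δ / 2)) (Real.sqrt 3 * Δ / 2) := by
    obtain ⟨ha, hb⟩ := abs_le.mp hyb
    constructor
    · linarith
    · linarith
  calc SINR ws wg Δ h α p σ2 x y
      ≤ SINR ws wg Δ h α p σ2 (x - m*Δ) (y - n*(Real.sqrt 3*Δ)) :=
        step1 hΔ hh hα hp hσ hwsnn hwgnn hsum hmono x y _ _ m n rfl rfl hx2 hy2
    _ ≤ SINR ws wg Δ h α p σ2 0 (y - n*(Real.sqrt 3*Δ)) :=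
        step2 hΔ hh hα hp hσ hwsnn hwgnn hsum hmono hW00 hconvx hxmem hymem
    _ ≤ SINR ws wg Δ h α p σ2 0 0 :=
        step3 hΔ hh hα hp hσ hwsnn hwgnn hsum hmono hW00 hconvy hymem
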